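/- A variable-regular Tanner graph with column weight 3, girth 8, in which all cycles of length up to 12 are chordless, has minimum distance at least 10. -/

import Mathlib

open SimpleGraph Finset

/-- A cycle (given as a closed walk) in a graph has a chord if either there is an
edge of the graph between two vertices of the cycle that is not an edge of the cycle,
or there is a vertex outside the cycle adjacent to two distinct vertices of the cycle. -/
def HasChord {V : Type*} (G : SimpleGraph V) {v : V} (c : G.Walk v v) : Prop :=
  (∃ x ∈ c.support, ∃ y ∈ c.support, G.Adj x y ∧ s(x, y) ∉ c.edges) ∨
  (∃ w, w ∉ c.support ∧ ∃ x ∈ c.support, ∃ y ∈ c.support, x ≠ y ∧ G.Adj w x ∧ G.Adj w y)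

set_option linter.unusedSectionVars false
set_option maxHeartbeats 1600000

namespace Stmt15Proof

section Cycles
variable {V : Type*}

/-- Helper: a cycle's length bounds the girth; with girth ≥ 8, short cycles are impossible. -/
lemma girth_contra {G : SimpleGraph V} (hg : (8 : ℕ∞) ≤ G.girth)
    {a : V} (w : G.Walk a a) (hw : w.IsCycle) (hl : w.length ≤ 7) : False := by
  have h1 : G.egirth ≤ w.length := SimpleGraph.le_egirth.mp le_rfl a w hw
  have hne : G.egirth ≠ ⊤ := by
    intro h; rw [h] at h1
    exact absurd (top_le_iff.mp h1) (by simp)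
  have h2 : (G.girth : ℕ∞) = G.egirth := ENat.coe_toNat hne
  rw [h2] at hg
  have h3 : (8 : ℕ∞) ≤ (w.length : ℕ∞) := hg.trans h1
  have h4 : (8 : ℕ) ≤ w.length := by exact_mod_cast h3
  omega

lemma no4 {G : SimpleGraph V} (hg : (8 : ℕ∞) ≤ G.girth)
    {a b c d : V} (h1 : G.Adj a b) (h2 : G.Adj b c) (h3 : G.Adj c d) (h4 : G.Adj d a)
    (hac : a ≠ c) (hbd : b ≠ d) : False := by
  have hab := h1.ne
  have hbc := h2.ne
  have hcd := h3.ne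
  have hda := h4.ne
  let w : G.Walk a a := .cons h1 (.cons h2 (.cons h3 (.cons h4 .nil)))
  have hw : w.IsCycle := by
    constructor
    · constructor
      · simp only [w, Walk.isTrail_def, Walk.edges_cons, Walk.edges_nil, List.nodup_cons,
          List.mem_cons, List.not_mem_nil, or_false, Sym2.eq_iff, List.nodup_nil, and_true]
        push_neg
        refine ⟨?_, ?_, ?_⟩ <;> aesop
      · simp [w]
    · show w.support.tail.Nodup
      simp only [w, Walk.support_cons, Walk.support_nil, List.tail_cons, List.nodup_cons,
        List.mem_cons, List.not_mem_nil, or_false, List.nodup_nil, and_true]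
      push_neg
      refine ⟨?_, ?_, ?_⟩ <;> aesop
  exact girth_contra hg w hw (by simp [w])

lemma no6 {G : SimpleGraph V} (hg : (8 : ℕ∞) ≤ G.girth)
    {a b c d e f : V} (h1 : G.Adj a b) (h2 : G.Adj b c) (h3 : G.Adj c d) (h4 : G.Adj d e)
    (h5 : G.Adj e f) (h6 : G.Adj f a)
    (nac : a ≠ c) (nad : a ≠ d) (nae : a ≠ e) (nbd : b ≠ d) (nbe : b ≠ e) (nbf : b ≠ f)
    (nce : c ≠ e) (ncf : c ≠ f) (ndf : d ≠ f) : False := by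
  have hab := h1.ne
  have hbc := h2.ne
  have hcd := h3.ne
  have hde := h4.ne
  have hef := h5.ne
  have hfa := h6.ne
  let w : G.Walk a a := .cons h1 (.cons h2 (.cons h3 (.cons h4 (.cons h5 (.cons h6 .nil)))))
  have hw : w.IsCycle := by
    constructor
    · constructor
      · simp only [w, Walk.isTrail_def, Walk.edges_cons, Walk.edges_nil, List.nodup_cons,
          List.mem_cons, List.not_mem_nil, or_false, Sym2.eq_iff, List.nodup_nil, and_true]
        push_neg
        refine ⟨?_, ?_, ?_, ?_, ?_⟩ <;> aesop
      · simp [w]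
    · show w.support.tail.Nodup
      simp only [w, Walk.support_cons, Walk.support_nil, List.tail_cons, List.nodup_cons,
        List.mem_cons, List.not_mem_nil, or_false, List.nodup_nil, and_true]
      push_neg
      refine ⟨?_, ?_, ?_, ?_, ?_⟩ <;> aesop
  exact girth_contra hg w hw (by simp [w])

lemma chord12 (G : SimpleGraph V) (isVar : V → Prop)
    (hchord : ∀ (v : V) (c : G.Walk v v), c.IsCycle → c.length ≤ 12 → ¬ HasChord G c)
    (x1 x2 x3 x4 x5 x6 d1 d2 d3 d4 d5 d6 e q : V)
    (vx1 : isVar x1) (vx2 : isVar x2) (vx3 : isVar x3) (vx4 : isVar x4)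
    (vx5 : isVar x5) (vx6 : isVar x6)
    (cd1 : ¬ isVar d1) (cd2 : ¬ isVar d2) (cd3 : ¬ isVar d3)
    (cd4 : ¬ isVar d4) (cd5 : ¬ isVar d5) (cd6 : ¬ isVar d6) (ce : ¬ isVar e)
    (nx12 : x1 ≠ x2) (nx13 : x1 ≠ x3) (nx14 : x1 ≠ x4) (nx15 : x1 ≠ x5) (nx16 : x1 ≠ x6)
    (nx23 : x2 ≠ x3) (nx24 : x2 ≠ x4) (nx25 : x2 ≠ x5) (nx26 : x2 ≠ x6)
    (nx34 : x3 ≠ x4) (nx35 : x3 ≠ x5) (nx36 : x3 ≠ x6)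
    (nx45 : x4 ≠ x5) (nx46 : x4 ≠ x6) (nx56 : x5 ≠ x6)
    (nd12 : d1 ≠ d2) (nd13 : d1 ≠ d3) (nd14 : d1 ≠ d4) (nd15 : d1 ≠ d5) (nd16 : d1 ≠ d6)
    (nd23 : d2 ≠ d3) (nd24 : d2 ≠ d4) (nd25 : d2 ≠ d5) (nd26 : d2 ≠ d6)
    (nd34 : d3 ≠ d4) (nd35 : d3 ≠ d5) (nd36 : d3 ≠ d6)
    (nd45 : d4 ≠ d5) (nd46 : d4 ≠ d6) (nd56 : d5 ≠ d6)
    (ne1 : e ≠ d1) (ne2 : e ≠ d2) (ne3 : e ≠ d3) (ne4 : e ≠ d4) (ne5 : e ≠ d5) (ne6 : e ≠ d6)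
    (a1 : G.Adj x1 d1) (a2 : G.Adj d1 x2) (a3 : G.Adj x2 d2) (a4 : G.Adj d2 x3)
    (a5 : G.Adj x3 d3) (a6 : G.Adj d3 x4) (a7 : G.Adj x4 d4) (a8 : G.Adj d4 x5)
    (a9 : G.Adj x5 d5) (a10 : G.Adj d5 x6) (a11 : G.Adj x6 d6) (a12 : G.Adj d6 x1)
    (hq : q = x3 ∨ q = x4 ∨ q = x5)
    (he1 : G.Adj e x1) (heq : G.Adj e q) : False := by
  have sep : ∀ y z : V, isVar y → ¬ isVar z → y ≠ z := fun y z hy hz h => hz (h ▸ hy)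
  have n1 := sep x1 d1 vx1 cd1; have n2 := sep x1 d2 vx1 cd2
  have n3 := sep x1 d3 vx1 cd3; have n4 := sep x1 d4 vx1 cd4
  have n5 := sep x1 d5 vx1 cd5; have n6 := sep x1 d6 vx1 cd6
  have m1 := sep x2 d1 vx2 cd1; have m2 := sep x2 d2 vx2 cd2
  have m3 := sep x2 d3 vx2 cd3; have m4 := sep x2 d4 vx2 cd4
  have m5 := sep x2 d5 vx2 cd5; have m6 := sep x2 d6 vx2 cd6
  have o1 := sep x3 d1 vx3 cd1; have o2 := sep x3 d2 vx3 cd2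
  have o3 := sep x3 d3 vx3 cd3; have o4 := sep x3 d4 vx3 cd4
  have o5 := sep x3 d5 vx3 cd5; have o6 := sep x3 d6 vx3 cd6
  have p1 := sep x4 d1 vx4 cd1; have p2 := sep x4 d2 vx4 cd2
  have p3 := sep x4 d3 vx4 cd3; have p4 := sep x4 d4 vx4 cd4
  have p5 := sep x4 d5 vx4 cd5; have p6 := sep x4 d6 vx4 cd6
  have r1 := sep x5 d1 vx5 cd1; have r2 := sep x5 d2 vx5 cd2
  have r3 := sep x5 d3 vx5 cd3; have r4 := sep x5 d4 vx5 cd4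
  have r5 := sep x5 d5 vx5 cd5; have r6 := sep x5 d6 vx5 cd6
  have s1 := sep x6 d1 vx6 cd1; have s2 := sep x6 d2 vx6 cd2
  have s3 := sep x6 d3 vx6 cd3; have s4 := sep x6 d4 vx6 cd4
  have s5 := sep x6 d5 vx6 cd5; have s6 := sep x6 d6 vx6 cd6
  have ex1 := sep x1 e vx1 ce; have ex2 := sep x2 e vx2 ce
  have ex3 := sep x3 e vx3 ce; have ex4 := sep x4 e vx4 ce
  have ex5 := sep x5 e vx5 ce; have ex6 := sep x6 e vx6 ce
  let w : G.Walk x1 x1 := .cons a1 (.cons a2 (.cons a3 (.cons a4 (.cons a5 (.cons a6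
    (.cons a7 (.cons a8 (.cons a9 (.cons a10 (.cons a11 (.cons a12 .nil)))))))))))
  have hsup : w.support = [x1, d1, x2, d2, x3, d3, x4, d4, x5, d5, x6, d6, x1] := by
    simp [w]
  have hw : w.IsCycle := by
    constructor
    · constructor
      · simp only [w, Walk.isTrail_def, Walk.edges_cons, Walk.edges_nil, List.nodup_cons,
          List.mem_cons, List.not_mem_nil, or_false, Sym2.eq_iff, List.nodup_nil, and_true]
        push_neg
        refine ⟨?_, ?_, ?_, ?_, ?_, ?_, ?_, ?_, ?_, ?_, ?_⟩ <;> aesop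
      · simp [w]
    · show w.support.tail.Nodup
      rw [hsup]
      simp only [List.tail_cons, List.nodup_cons, List.mem_cons, List.not_mem_nil, or_false,
        List.nodup_nil, and_true]
      push_neg
      refine ⟨?_, ?_, ?_, ?_, ?_, ?_, ?_, ?_, ?_, ?_, ?_⟩ <;> aesop
  have hlen : w.length = 12 := by simp [w]
  apply hchord x1 w hw (by rw [hlen])
  right
  refine ⟨e, ?_, x1, ?_, q, ?_, ?_, he1, heq⟩
  · rw [hsup]; simp only [List.mem_cons, List.not_mem_nil, or_false]
    push_neg
    refine ⟨?_, ?_, ?_, ?_, ?_, ?_, ?_, ?_, ?_, ?_, ?_, ?_, ?_⟩ <;> aesop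
  · rw [hsup]; simp
  · rw [hsup]; rcases hq with h|h|h <;> subst h <;> simp
  · rcases hq with h|h|h <;> subst h <;> [exact nx13; exact nx14; exact nx15]

end Cycles

section RelLemmas
variable {V : Type*} [Fintype V] [DecidableEq V]

/-- Two variable nodes are `Rel`-related if both lie in `S` and share a check node. -/
def Rel (G : SimpleGraph V) (isVar : V → Prop) (S : Finset V) (u w : V) : Prop :=
  u ∈ S ∧ w ∈ S ∧ u ≠ w ∧ ∃ c, ¬ isVar c ∧ G.Adj c u ∧ G.Adj c w

variable {G : SimpleGraph V} [DecidableRel G.Adj] {isVar : V → Prop} {S : Finset V}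

lemma Rel.symm {u w : V} (h : Rel G isVar S u w) : Rel G isVar S w u := by
  obtain ⟨h1, h2, h3, c, hc, ha, hb⟩ := h
  exact ⟨h2, h1, h3.symm, c, hc, hb, ha⟩

/-- pair uniqueness from the "degree 2 into S" hypothesis -/
lemma pair_eq
    (helem : ∀ c, ¬ isVar c → ∀ v ∈ S, G.Adj c v → (S.filter (fun u => G.Adj c u)).card = 2)
    {c u v : V} (hc : ¬ isVar c) (hu : u ∈ S) (hv : v ∈ S) (hau : G.Adj c u)
    (hav : G.Adj c v) (huv : u ≠ v) {z : V} (hz : z ∈ S) (haz : G.Adj c z) :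
    z = u ∨ z = v := by
  have hcard := helem c hc u hu hau
  have hsub : ({u, v} : Finset V) ⊆ S.filter (fun x => G.Adj c x) := by
    intro x hx
    rcases Finset.mem_insert.mp hx with h | h
    · subst h; exact Finset.mem_filter.mpr ⟨hu, hau⟩
    · rw [Finset.mem_singleton.mp h]; exact Finset.mem_filter.mpr ⟨hv, hav⟩
  have hc2 : ({u, v} : Finset V).card = 2 := by
    rw [Finset.card_insert_of_notMem (by simp [huv]), Finset.card_singleton]
  have heq : ({u, v} : Finset V) = S.filter (fun x => G.Adj c x) :=
    Finset.eq_of_subset_of_card_le hsub (by omega)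
  have : z ∈ ({u, v} : Finset V) := heq ▸ Finset.mem_filter.mpr ⟨hz, haz⟩
  simpa using this

/-- two distinct checks cannot share two distinct variable neighbours (4-cycle). -/
lemma no_share (hg : (8 : ℕ∞) ≤ G.girth) {c c' u v : V} (hcc : c ≠ c') (huv : u ≠ v)
    (h1 : G.Adj c u) (h2 : G.Adj c v) (h3 : G.Adj c' u) (h4 : G.Adj c' v) : False :=
  no4 hg h1.symm h2 h4.symm h3 huv hcc

/-- each check adjacent to a vertex of S has a second (distinct) neighbour in S. -/
lemma other_partner
    (helem : ∀ c, ¬ isVar c → ∀ v ∈ S, G.Adj c v → (S.filter (fun u => G.Adj c u)).card = 2)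
    {c z : V} (hc : ¬ isVar c) (hz : z ∈ S) (ha : G.Adj c z) :
    ∃ u, u ∈ S ∧ u ≠ z ∧ G.Adj c u := by
  have hcard := helem c hc z hz ha
  obtain ⟨a, b, hab, habs⟩ := Finset.card_eq_two.mp hcard
  have hzm : z ∈ S.filter (fun u => G.Adj c u) := Finset.mem_filter.mpr ⟨hz, ha⟩
  rw [habs] at hzm
  have hma : a ∈ S.filter (fun u => G.Adj c u) := by rw [habs]; simp
  have hmb : b ∈ S.filter (fun u => G.Adj c u) := by rw [habs]; simp
  rcases Finset.mem_insert.mp hzm with h | h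
  · exact ⟨b, (Finset.mem_filter.mp hmb).1, by rw [← h] at hab; exact fun e => hab e.symm,
      (Finset.mem_filter.mp hmb).2⟩
  · have hzb : z = b := Finset.mem_singleton.mp h
    subst hzb
    exact ⟨a, (Finset.mem_filter.mp hma).1, hab, (Finset.mem_filter.mp hma).2⟩

/-- triangle in the `Rel` graph contradicts girth ≥ 8. -/
lemma no_tri (hg : (8 : ℕ∞) ≤ G.girth) (hSvar : ∀ v ∈ S, isVar v)
    (helem : ∀ c, ¬ isVar c → ∀ v ∈ S, G.Adj c v → (S.filter (fun u => G.Adj c u)).card = 2)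
    {x y z : V} (hxy : Rel G isVar S x y) (hyz : Rel G isVar S y z)
    (hxz : Rel G isVar S x z) : False := by
  obtain ⟨hxS, hyS, hnxy, c1, hc1, h1x, h1y⟩ := hxy
  obtain ⟨-, hzS, hnyz, c2, hc2, h2y, h2z⟩ := hyz
  obtain ⟨-, -, hnxz, c3, hc3, h3x, h3z⟩ := hxz
  have n12 : c1 ≠ c2 := by
    intro h; subst h
    rcases pair_eq helem hc1 hxS hyS h1x h1y hnxy hzS h2z with h | h
    · exact hnxz h.symm
    · exact hnyz h.symm
  have n13 : c1 ≠ c3 := by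
    intro h; subst h
    rcases pair_eq helem hc1 hxS hyS h1x h1y hnxy hzS h3z with h | h
    · exact hnxz h.symm
    · exact hnyz h.symm
  have n23 : c2 ≠ c3 := by
    intro h; subst h
    rcases pair_eq helem hc2 hyS hzS h2y h2z hnyz hxS h3x with h | h
    · exact hnxy h
    · exact hnxz h
  have sep : ∀ a b : V, isVar a → ¬ isVar b → a ≠ b := fun a b ha hb h => hb (h ▸ ha)
  have vx := hSvar x hxS
  have vy := hSvar y hyS
  have vz := hSvar z hzS
  exact no6 hg h1x.symm h1y h2y.symm h2z h3z.symm h3x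
    hnxy (sep x c2 vx hc2) hnxz n12 (sep z c1 vz hc1).symm n13 hnyz (sep y c3 vy hc3) n23

lemma partners3 (hg : (8 : ℕ∞) ≤ G.girth)
    (hbip : ∀ x y, G.Adj x y → (isVar x ↔ ¬ isVar y))
    (hdegV : ∀ v, isVar v → G.degree v = 3) (hSvar : ∀ v ∈ S, isVar v)
    (helem : ∀ c, ¬ isVar c → ∀ v ∈ S, G.Adj c v → (S.filter (fun u => G.Adj c u)).card = 2)
    {z : V} (hz : z ∈ S) :
    ∃ w1 w2 w3, w1 ≠ w2 ∧ w1 ≠ w3 ∧ w2 ≠ w3 ∧ Rel G isVar S z w1 ∧ Rel G isVar S z w2 ∧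
      Rel G isVar S z w3 ∧ ∀ t, Rel G isVar S z t → t = w1 ∨ t = w2 ∨ t = w3 := by
  have hvz := hSvar z hz
  have hdeg : (G.neighborFinset z).card = 3 := hdegV z hvz
  obtain ⟨c1, c2, c3, n12, n13, n23, hset⟩ := Finset.card_eq_three.mp hdeg
  have ha1 : G.Adj z c1 := by
    rw [← SimpleGraph.mem_neighborFinset, hset]; simp
  have ha2 : G.Adj z c2 := by
    rw [← SimpleGraph.mem_neighborFinset, hset]; simp
  have ha3 : G.Adj z c3 := by
    rw [← SimpleGraph.mem_neighborFinset, hset]; simp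
  have hcc1 : ¬ isVar c1 := (hbip z c1 ha1).mp hvz
  have hcc2 : ¬ isVar c2 := (hbip z c2 ha2).mp hvz
  have hcc3 : ¬ isVar c3 := (hbip z c3 ha3).mp hvz
  obtain ⟨w1, hw1S, hw1z, hw1a⟩ := other_partner helem hcc1 hz ha1.symm
  obtain ⟨w2, hw2S, hw2z, hw2a⟩ := other_partner helem hcc2 hz ha2.symm
  obtain ⟨w3, hw3S, hw3z, hw3a⟩ := other_partner helem hcc3 hz ha3.symm
  have r1 : Rel G isVar S z w1 := ⟨hz, hw1S, hw1z.symm, c1, hcc1, ha1.symm, hw1a⟩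
  have r2 : Rel G isVar S z w2 := ⟨hz, hw2S, hw2z.symm, c2, hcc2, ha2.symm, hw2a⟩
  have r3 : Rel G isVar S z w3 := ⟨hz, hw3S, hw3z.symm, c3, hcc3, ha3.symm, hw3a⟩
  have d12 : w1 ≠ w2 := by
    intro h; subst h
    exact no_share hg n12 hw1z.symm ha1.symm hw1a ha2.symm hw2a
  have d13 : w1 ≠ w3 := by
    intro h; subst h
    exact no_share hg n13 hw1z.symm ha1.symm hw1a ha3.symm hw3a
  have d23 : w2 ≠ w3 := by
    intro h; subst h
    exact no_share hg n23 hw2z.symm ha2.symm hw2a ha3.symm hw3a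
  refine ⟨w1, w2, w3, d12, d13, d23, r1, r2, r3, ?_⟩
  rintro t ⟨-, htS, hzt, c, hc, hcz, hct⟩
  have hmem : c ∈ G.neighborFinset z := SimpleGraph.mem_neighborFinset .. |>.mpr hcz.symm
  rw [hset] at hmem
  rcases Finset.mem_insert.mp hmem with h | h
  · subst h
    rcases pair_eq helem hc hz hw1S hcz hw1a hw1z.symm htS hct with h | h
    · exact absurd h.symm hzt
    · exact Or.inl h
  rcases Finset.mem_insert.mp h with h | h
  · subst h
    rcases pair_eq helem hc hz hw2S hcz hw2a hw2z.symm htS hct with h | h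
    · exact absurd h.symm hzt
    · exact Or.inr (Or.inl h)
  · rw [Finset.mem_singleton.mp h] at hct
    rcases pair_eq helem hcc3 hz hw3S ha3.symm hw3a hw3z.symm htS hct with h | h
    · exact absurd h.symm hzt
    · exact Or.inr (Or.inr h)

lemma comp3 (hg : (8 : ℕ∞) ≤ G.girth)
    (hbip : ∀ x y, G.Adj x y → (isVar x ↔ ¬ isVar y))
    (hdegV : ∀ v, isVar v → G.degree v = 3) (hSvar : ∀ v ∈ S, isVar v)
    (helem : ∀ c, ¬ isVar c → ∀ v ∈ S, G.Adj c v → (S.filter (fun u => G.Adj c u)).card = 2)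
    {z a b c : V} (hz : z ∈ S) (hab : a ≠ b) (hac : a ≠ c) (hbc : b ≠ c)
    (hza : Rel G isVar S z a) (hzb : Rel G isVar S z b) (hzc : Rel G isVar S z c) :
    ∀ t, Rel G isVar S z t → t = a ∨ t = b ∨ t = c := by
  obtain ⟨w1, w2, w3, d12, d13, d23, r1, r2, r3, hcomp⟩ :=
    partners3 hg hbip hdegV hSvar helem hz
  have hsub : ({a, b, c} : Finset V) ⊆ ({w1, w2, w3} : Finset V) := by
    intro x hx
    simp only [Finset.mem_insert, Finset.mem_singleton] at hx ⊢
    rcases hx with h | h | h <;> subst h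
    · exact hcomp _ hza
    · exact hcomp _ hzb
    · exact hcomp _ hzc
  have hcabc : ({a, b, c} : Finset V).card = 3 := by
    rw [Finset.card_insert_of_notMem (by simp [hab, hac]),
      Finset.card_insert_of_notMem (by simp [hbc]), Finset.card_singleton]
  have hcw : ({w1, w2, w3} : Finset V).card ≤ 3 := by
    refine (Finset.card_insert_le _ _).trans ?_
    have h2 := Finset.card_insert_le w2 ({w3} : Finset V)
    simp only [Finset.card_singleton] at h2
    omega
  have heq : ({a, b, c} : Finset V) = ({w1, w2, w3} : Finset V) :=
    Finset.eq_of_subset_of_card_le hsub (by omega)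
  intro t ht
  have : t ∈ ({w1, w2, w3} : Finset V) := by
    simp only [Finset.mem_insert, Finset.mem_singleton]
    exact hcomp t ht
  rw [← heq] at this
  simpa using this

lemma pext2 (hg : (8 : ℕ∞) ≤ G.girth)
    (hbip : ∀ x y, G.Adj x y → (isVar x ↔ ¬ isVar y))
    (hdegV : ∀ v, isVar v → G.degree v = 3) (hSvar : ∀ v ∈ S, isVar v)
    (helem : ∀ c, ¬ isVar c → ∀ v ∈ S, G.Adj c v → (S.filter (fun u => G.Adj c u)).card = 2)
    {z a b : V} (hz : z ∈ S) (hab : a ≠ b)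
    (hza : Rel G isVar S z a) (hzb : Rel G isVar S z b) :
    ∃ w, Rel G isVar S z w ∧ w ≠ a ∧ w ≠ b ∧
      ∀ t, Rel G isVar S z t → t = a ∨ t = b ∨ t = w := by
  obtain ⟨w1, w2, w3, d12, d13, d23, r1, r2, r3, hcomp⟩ :=
    partners3 hg hbip hdegV hSvar helem hz
  have mk : ∀ w wa wb : V, Rel G isVar S z w → w ≠ wa → w ≠ wb → a = wa → b = wb →
      (∀ t, Rel G isVar S z t → t = wa ∨ t = wb ∨ t = w) →
      ∃ w, Rel G isVar S z w ∧ w ≠ a ∧ w ≠ b ∧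
        ∀ t, Rel G isVar S z t → t = a ∨ t = b ∨ t = w := by
    intro w wa wb hr hwa hwb ha hb hcp
    subst ha; subst hb
    exact ⟨w, hr, hwa, hwb, hcp⟩
  rcases hcomp a hza with ha | ha | ha <;> rcases hcomp b hzb with hb | hb | hb
  · exact absurd (ha.trans hb.symm) hab
  · exact mk w3 w1 w2 r3 d13.symm d23.symm ha hb (fun t ht => hcomp t ht)
  · exact mk w2 w1 w3 r2 d12.symm d23 ha hb (fun t ht => by rcases hcomp t ht with h|h|h <;> tauto)
  · exact mk w3 w2 w1 r3 d23.symm d13.symm ha hb (fun t ht => by rcases hcomp t ht with h|h|h <;> tauto)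
  · exact absurd (ha.trans hb.symm) hab
  · exact mk w1 w2 w3 r1 d12 d13 ha hb (fun t ht => by rcases hcomp t ht with h|h|h <;> tauto)
  · exact mk w2 w3 w1 r2 d23 d12.symm ha hb (fun t ht => by rcases hcomp t ht with h|h|h <;> tauto)
  · exact mk w1 w3 w2 r1 d13 d12 ha hb (fun t ht => by rcases hcomp t ht with h|h|h <;> tauto)
  · exact absurd (ha.trans hb.symm) hab

lemma pext1 (hg : (8 : ℕ∞) ≤ G.girth)
    (hbip : ∀ x y, G.Adj x y → (isVar x ↔ ¬ isVar y))
    (hdegV : ∀ v, isVar v → G.degree v = 3) (hSvar : ∀ v ∈ S, isVar v)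
    (helem : ∀ c, ¬ isVar c → ∀ v ∈ S, G.Adj c v → (S.filter (fun u => G.Adj c u)).card = 2)
    {z a : V} (hz : z ∈ S) (hza : Rel G isVar S z a) :
    ∃ b c, b ≠ c ∧ b ≠ a ∧ c ≠ a ∧ Rel G isVar S z b ∧ Rel G isVar S z c ∧
      ∀ t, Rel G isVar S z t → t = a ∨ t = b ∨ t = c := by
  obtain ⟨w1, w2, w3, d12, d13, d23, r1, r2, r3, hcomp⟩ :=
    partners3 hg hbip hdegV hSvar helem hz
  have mk : ∀ wa wb wc : V, a = wa → wb ≠ wc → wb ≠ wa → wc ≠ wa →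
      Rel G isVar S z wb → Rel G isVar S z wc →
      (∀ t, Rel G isVar S z t → t = wa ∨ t = wb ∨ t = wc) →
      ∃ b c, b ≠ c ∧ b ≠ a ∧ c ≠ a ∧ Rel G isVar S z b ∧ Rel G isVar S z c ∧
        ∀ t, Rel G isVar S z t → t = a ∨ t = b ∨ t = c := by
    intro wa wb wc ha h1 h2 h3 hb hc hcp
    subst ha
    exact ⟨wb, wc, h1, h2, h3, hb, hc, hcp⟩
  rcases hcomp a hza with h | h | h
  · exact mk w1 w2 w3 h d23 d12.symm d13.symm r2 r3 (fun t ht => hcomp t ht)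
  · exact mk w2 w1 w3 h d13 d12 d23.symm r1 r3
      (fun t ht => by rcases hcomp t ht with h1|h1|h1 <;> tauto)
  · exact mk w3 w1 w2 h d12 d13 d23 r1 r2
      (fun t ht => by rcases hcomp t ht with h1|h1|h1 <;> tauto)

lemma list_card {l : List V} (hl : l.Nodup) (hsub : ∀ x ∈ l, x ∈ S) :
    l.length ≤ S.card := by
  have h := Finset.card_le_card (fun x hx => hsub x (List.mem_toFinset.mp hx) :
    l.toFinset ⊆ S)
  rwa [List.toFinset_card_of_nodup hl] at h

lemma S_sub {l : List V} (hl : l.Nodup) (hsub : ∀ x ∈ l, x ∈ S)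
    (hcard : S.card ≤ l.length) : ∀ z ∈ S, z ∈ l := by
  have h1 : l.toFinset ⊆ S := fun x hx => hsub x (List.mem_toFinset.mp hx)
  have h2 : S.card ≤ l.toFinset.card := by
    rw [List.toFinset_card_of_nodup hl]; exact hcard
  have h3 := Finset.eq_of_subset_of_card_le h1 h2
  intro z hz
  rw [← h3] at hz
  exact List.mem_toFinset.mp hz

lemma hex
    (hchord : ∀ (v : V) (c : G.Walk v v), c.IsCycle → c.length ≤ 12 → ¬ HasChord G c)
    (hSvar : ∀ v ∈ S, isVar v)
    (helem : ∀ c, ¬ isVar c → ∀ v ∈ S, G.Adj c v → (S.filter (fun u => G.Adj c u)).card = 2)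
    {x1 x2 x3 x4 x5 x6 q : V}
    (nx12 : x1 ≠ x2) (nx13 : x1 ≠ x3) (nx14 : x1 ≠ x4) (nx15 : x1 ≠ x5) (nx16 : x1 ≠ x6)
    (nx23 : x2 ≠ x3) (nx24 : x2 ≠ x4) (nx25 : x2 ≠ x5) (nx26 : x2 ≠ x6)
    (nx34 : x3 ≠ x4) (nx35 : x3 ≠ x5) (nx36 : x3 ≠ x6)
    (nx45 : x4 ≠ x5) (nx46 : x4 ≠ x6) (nx56 : x5 ≠ x6)
    (e1 : Rel G isVar S x1 x2) (e2 : Rel G isVar S x2 x3) (e3 : Rel G isVar S x3 x4)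
    (e4 : Rel G isVar S x4 x5) (e5 : Rel G isVar S x5 x6) (e6 : Rel G isVar S x6 x1)
    (hq : q = x3 ∨ q = x4 ∨ q = x5)
    (ch : Rel G isVar S x1 q) : False := by
  obtain ⟨m1, m2, -, d1, hd1, b1, b2⟩ := e1
  obtain ⟨-, m3, -, d2, hd2, b3, b4⟩ := e2
  obtain ⟨-, m4, -, d3, hd3, b5, b6⟩ := e3
  obtain ⟨-, m5, -, d4, hd4, b7, b8⟩ := e4
  obtain ⟨-, m6, -, d5, hd5, b9, b10⟩ := e5
  obtain ⟨-, -, -, d6, hd6, b11, b12⟩ := e6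
  obtain ⟨-, mq, nq1, e, he, he1, heq⟩ := ch
  have dne : ∀ c c' a b a' : V, ¬ isVar c → a ∈ S → b ∈ S → a' ∈ S →
      G.Adj c a → G.Adj c b → a ≠ b → G.Adj c' a' → a' ≠ a → a' ≠ b → c ≠ c' := by
    intro c c' a b a' hc ha hb ha' hca hcb hab hca' h1 h2 hcc
    subst hcc
    rcases pair_eq helem hc ha hb hca hcb hab ha' hca' with h | h
    · exact h1 h
    · exact h2 h
  have nd12 : d1 ≠ d2 := dne d1 d2 x1 x2 x3 hd1 m1 m2 m3 b1 b2 nx12 b4 nx13.symm nx23.symm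
  have nd13 : d1 ≠ d3 := dne d1 d3 x1 x2 x4 hd1 m1 m2 m4 b1 b2 nx12 b6 nx14.symm nx24.symm
  have nd14 : d1 ≠ d4 := dne d1 d4 x1 x2 x5 hd1 m1 m2 m5 b1 b2 nx12 b8 nx15.symm nx25.symm
  have nd15 : d1 ≠ d5 := dne d1 d5 x1 x2 x6 hd1 m1 m2 m6 b1 b2 nx12 b10 nx16.symm nx26.symm
  have nd16 : d1 ≠ d6 := dne d1 d6 x1 x2 x6 hd1 m1 m2 m6 b1 b2 nx12 b11 nx16.symm nx26.symm
  have nd23 : d2 ≠ d3 := dne d2 d3 x2 x3 x4 hd2 m2 m3 m4 b3 b4 nx23 b6 nx24.symm nx34.symm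
  have nd24 : d2 ≠ d4 := dne d2 d4 x2 x3 x5 hd2 m2 m3 m5 b3 b4 nx23 b8 nx25.symm nx35.symm
  have nd25 : d2 ≠ d5 := dne d2 d5 x2 x3 x6 hd2 m2 m3 m6 b3 b4 nx23 b10 nx26.symm nx36.symm
  have nd26 : d2 ≠ d6 := dne d2 d6 x2 x3 x6 hd2 m2 m3 m6 b3 b4 nx23 b11 nx26.symm nx36.symm
  have nd34 : d3 ≠ d4 := dne d3 d4 x3 x4 x5 hd3 m3 m4 m5 b5 b6 nx34 b8 nx35.symm nx45.symm
  have nd35 : d3 ≠ d5 := dne d3 d5 x3 x4 x6 hd3 m3 m4 m6 b5 b6 nx34 b10 nx36.symm nx46.symm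
  have nd36 : d3 ≠ d6 := dne d3 d6 x3 x4 x6 hd3 m3 m4 m6 b5 b6 nx34 b11 nx36.symm nx46.symm
  have nd45 : d4 ≠ d5 := dne d4 d5 x4 x5 x6 hd4 m4 m5 m6 b7 b8 nx45 b10 nx46.symm nx56.symm
  have nd46 : d4 ≠ d6 := dne d4 d6 x4 x5 x1 hd4 m4 m5 m1 b7 b8 nx45 b12 nx14 nx15
  have nd56 : d5 ≠ d6 := dne d5 d6 x5 x6 x1 hd5 m5 m6 m1 b9 b10 nx56 b12 nx15 nx16
  -- e ≠ d_i
  have ne' : ∀ d a : V, a ∈ S → G.Adj d a → a ≠ x1 → a ≠ q → e ≠ d := by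
    intro d a ha hda h1 h2 hed
    subst hed
    rcases pair_eq helem he m1 mq he1 heq nq1 ha hda with h | h
    · exact h1 h
    · exact h2 h
  have vars := fun z (h : z ∈ S) => hSvar z h
  rcases hq with h | h | h
  · have k2 : x2 ≠ q := fun e => nx23 (e.trans h)
    have k4 : x4 ≠ q := fun e => nx34.symm (e.trans h)
    have k5 : x5 ≠ q := fun e => nx35.symm (e.trans h)
    have k6 : x6 ≠ q := fun e => nx36.symm (e.trans h)
    exact chord12 G isVar hchord x1 x2 x3 x4 x5 x6 d1 d2 d3 d4 d5 d6 e q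
      (vars _ m1) (vars _ m2) (vars _ m3) (vars _ m4) (vars _ m5) (vars _ m6)
      hd1 hd2 hd3 hd4 hd5 hd6 he
      nx12 nx13 nx14 nx15 nx16 nx23 nx24 nx25 nx26 nx34 nx35 nx36 nx45 nx46 nx56
      nd12 nd13 nd14 nd15 nd16 nd23 nd24 nd25 nd26 nd34 nd35 nd36 nd45 nd46 nd56
      (ne' d1 x2 m2 b2 nx12.symm k2) (ne' d2 x2 m2 b3 nx12.symm k2)
      (ne' d3 x4 m4 b6 nx14.symm k4) (ne' d4 x4 m4 b7 nx14.symm k4)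
      (ne' d5 x5 m5 b9 nx15.symm k5) (ne' d6 x6 m6 b11 nx16.symm k6)
      b1.symm b2 b3.symm b4 b5.symm b6 b7.symm b8 b9.symm b10 b11.symm b12
      (Or.inl h) he1 heq
  · have k2 : x2 ≠ q := fun e => nx24 (e.trans h)
    have k3 : x3 ≠ q := fun e => nx34 (e.trans h)
    have k5 : x5 ≠ q := fun e => nx45.symm (e.trans h)
    have k6 : x6 ≠ q := fun e => nx46.symm (e.trans h)
    exact chord12 G isVar hchord x1 x2 x3 x4 x5 x6 d1 d2 d3 d4 d5 d6 e q
      (vars _ m1) (vars _ m2) (vars _ m3) (vars _ m4) (vars _ m5) (vars _ m6)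
      hd1 hd2 hd3 hd4 hd5 hd6 he
      nx12 nx13 nx14 nx15 nx16 nx23 nx24 nx25 nx26 nx34 nx35 nx36 nx45 nx46 nx56
      nd12 nd13 nd14 nd15 nd16 nd23 nd24 nd25 nd26 nd34 nd35 nd36 nd45 nd46 nd56
      (ne' d1 x2 m2 b2 nx12.symm k2) (ne' d2 x3 m3 b4 nx13.symm k3)
      (ne' d3 x3 m3 b5 nx13.symm k3) (ne' d4 x5 m5 b8 nx15.symm k5)
      (ne' d5 x5 m5 b9 nx15.symm k5) (ne' d6 x6 m6 b11 nx16.symm k6)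
      b1.symm b2 b3.symm b4 b5.symm b6 b7.symm b8 b9.symm b10 b11.symm b12
      (Or.inr (Or.inl h)) he1 heq
  · have k2 : x2 ≠ q := fun e => nx25 (e.trans h)
    have k3 : x3 ≠ q := fun e => nx35 (e.trans h)
    have k4 : x4 ≠ q := fun e => nx45 (e.trans h)
    have k6 : x6 ≠ q := fun e => nx56.symm (e.trans h)
    exact chord12 G isVar hchord x1 x2 x3 x4 x5 x6 d1 d2 d3 d4 d5 d6 e q
      (vars _ m1) (vars _ m2) (vars _ m3) (vars _ m4) (vars _ m5) (vars _ m6)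
      hd1 hd2 hd3 hd4 hd5 hd6 he
      nx12 nx13 nx14 nx15 nx16 nx23 nx24 nx25 nx26 nx34 nx35 nx36 nx45 nx46 nx56
      nd12 nd13 nd14 nd15 nd16 nd23 nd24 nd25 nd26 nd34 nd35 nd36 nd45 nd46 nd56
      (ne' d1 x2 m2 b2 nx12.symm k2) (ne' d2 x3 m3 b4 nx13.symm k3)
      (ne' d3 x4 m4 b6 nx14.symm k4) (ne' d4 x4 m4 b7 nx14.symm k4)
      (ne' d5 x6 m6 b10 nx16.symm k6) (ne' d6 x6 m6 b11 nx16.symm k6)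
      b1.symm b2 b3.symm b4 b5.symm b6 b7.symm b8 b9.symm b10 b11.symm b12
      (Or.inr (Or.inr h)) he1 heq
lemma K3 (hg : (8 : ℕ∞) ≤ G.girth)
    (hbip : ∀ x y, G.Adj x y → (isVar x ↔ ¬ isVar y))
    (hdegV : ∀ v, isVar v → G.degree v = 3) (hSvar : ∀ v ∈ S, isVar v)
    (helem : ∀ c, ¬ isVar c → ∀ v ∈ S, G.Adj c v → (S.filter (fun u => G.Adj c u)).card = 2)
    (hchord : ∀ (v : V) (c : G.Walk v v), c.IsCycle → c.length ≤ 12 → ¬ HasChord G c)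
    {v p q r u : V}
    (hvp : Rel G isVar S v p) (hvq : Rel G isVar S v q) (hvr : Rel G isVar S v r)
    (npq : p ≠ q) (npr : p ≠ r) (nqr : q ≠ r)
    (hnpq : ¬ Rel G isVar S p q) (hnpr : ¬ Rel G isVar S p r) (hnqr : ¬ Rel G isVar S q r)
    (huv : u ≠ v) (hup : Rel G isVar S u p) (huq : Rel G isVar S u q)
    (hur : Rel G isVar S u r) (hS8 : S.card ≤ 8) : False := by
  have hvS := hvp.1
  have hpS := hvp.2.1
  have hqS := hvq.2.1
  have hrS := hvr.2.1
  have huS := hup.1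
  have nvp := hvp.2.2.1
  have nvq := hvq.2.2.1
  have nvr := hvr.2.2.1
  have nup := hup.2.2.1
  have nuq := huq.2.2.1
  have nur := hur.2.2.1
  have complete_v := comp3 hg hbip hdegV hSvar helem hvS npq npr nqr hvp hvq hvr
  have complete_u := comp3 hg hbip hdegV hSvar helem huS npq npr nqr hup huq hur
  obtain ⟨sp, hpsp, hspv, hspu, comp_p⟩ :=
    pext2 hg hbip hdegV hSvar helem hpS huv.symm hvp.symm hup.symm
  obtain ⟨sq, hqsq, hsqv, hsqu, comp_q⟩ :=
    pext2 hg hbip hdegV hSvar helem hqS huv.symm hvq.symm huq.symm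
  obtain ⟨sr, hrsr, hsrv, hsru, comp_r⟩ :=
    pext2 hg hbip hdegV hSvar helem hrS huv.symm hvr.symm hur.symm
  have hspp : sp ≠ p := hpsp.2.2.1.symm
  have hsqq : sq ≠ q := hqsq.2.2.1.symm
  have hsrr : sr ≠ r := hrsr.2.2.1.symm
  have hspq : sp ≠ q := fun e => hnpq (e ▸ hpsp)
  have hspr : sp ≠ r := fun e => hnpr (e ▸ hpsp)
  have hsqp : sq ≠ p := fun e => hnpq (e ▸ hqsq).symm
  have hsqr : sq ≠ r := fun e => hnqr (e ▸ hqsq)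
  have hsrp : sr ≠ p := fun e => hnpr (e ▸ hrsr).symm
  have hsrq : sr ≠ q := fun e => hnqr (e ▸ hrsr).symm
  have hspS := hpsp.2.1
  have hsqS := hqsq.2.1
  have hsrS := hrsr.2.1
  by_cases h1 : sp = sq
  · exact hex hchord hSvar helem nvp hspv.symm nvq huv.symm nvr
      hpsp.2.2.1 npq nup.symm npr hspq hspu hspr nuq.symm nqr nur
      hvp hpsp (by rw [h1]; exact hqsq.symm) huq.symm hur hvr.symm
      (Or.inr (Or.inl rfl)) hvq
  by_cases h2 : sp = sr
  · exact hex hchord hSvar helem nvp hspv.symm nvr huv.symm nvq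
      hpsp.2.2.1 npr nup.symm npq hspr hspu hspq nur.symm nqr.symm nuq
      hvp hpsp (by rw [h2]; exact hrsr.symm) hur.symm huq hvq.symm
      (Or.inr (Or.inl rfl)) hvr
  by_cases h3 : sq = sr
  · exact hex hchord hSvar helem nvq hsqv.symm nvr huv.symm nvp
      hqsq.2.2.1 nqr nuq.symm npq.symm hsqr hsqu hsqp nur.symm npr.symm nup
      hvq hqsq (by rw [h3]; exact hrsr.symm) hur.symm hup hvp.symm
      (Or.inr (Or.inl rfl)) hvr
  -- all of sp, sq, sr distinct: S is exactly these 8 vertices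
  have hnodup : ([v, p, q, r, u, sp, sq, sr] : List V).Nodup := by
    simp only [List.nodup_cons, List.mem_cons, List.not_mem_nil, or_false, List.nodup_nil,
      and_true]
    push_neg
    exact ⟨⟨nvp, nvq, nvr, huv.symm, hspv.symm, hsqv.symm, hsrv.symm⟩,
      ⟨npq, npr, nup.symm, hspp.symm, hsqp.symm, hsrp.symm⟩,
      ⟨nqr, nuq.symm, hspq.symm, hsqq.symm, hsrq.symm⟩,
      ⟨nur.symm, hspr.symm, hsqr.symm, hsrr.symm⟩,
      ⟨hspu.symm, hsqu.symm, hsru.symm⟩, ⟨h1, h2⟩, ⟨h3, trivial⟩⟩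
  have hmeml : ∀ x ∈ ([v, p, q, r, u, sp, sq, sr] : List V), x ∈ S := by
    intro x hx
    simp only [List.mem_cons, List.not_mem_nil, or_false] at hx
    rcases hx with rfl|rfl|rfl|rfl|rfl|rfl|rfl|rfl
    exacts [hvS, hpS, hqS, hrS, huS, hspS, hsqS, hsrS]
  have mem8 := S_sub hnodup hmeml (by simpa using hS8)
  obtain ⟨b, c, hbc, hbp, hcp, hspb, hspc, -⟩ :=
    pext1 hg hbip hdegV hSvar helem hspS hpsp.symm
  have filt : ∀ t, Rel G isVar S sp t → t ≠ p → t = sq ∨ t = sr := by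
    intro t ht htp
    have := mem8 t ht.2.1
    simp only [List.mem_cons, List.not_mem_nil, or_false] at this
    rcases this with rfl|rfl|rfl|rfl|rfl|rfl|rfl|rfl
    · rcases complete_v sp ht.symm with h|h|h
      exacts [absurd h hspp, absurd h hspq, absurd h hspr]
    · exact absurd rfl htp
    · rcases comp_q sp ht.symm with h|h|h
      exacts [absurd h hspv, absurd h hspu, absurd h h1]
    · rcases comp_r sp ht.symm with h|h|h
      exacts [absurd h hspv, absurd h hspu, absurd h h2]
    · rcases complete_u sp ht.symm with h|h|h
      exacts [absurd h hspp, absurd h hspq, absurd h hspr]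
    · exact absurd rfl ht.2.2.1
    · exact Or.inl rfl
    · exact Or.inr rfl
  obtain ⟨b', c', hbc', hbq, hcq, hsqb, hsqc, -⟩ :=
    pext1 hg hbip hdegV hSvar helem hsqS hqsq.symm
  have filt' : ∀ t, Rel G isVar S sq t → t ≠ q → t = sp ∨ t = sr := by
    intro t ht htq
    have := mem8 t ht.2.1
    simp only [List.mem_cons, List.not_mem_nil, or_false] at this
    rcases this with rfl|rfl|rfl|rfl|rfl|rfl|rfl|rfl
    · rcases complete_v sq ht.symm with h|h|h
      exacts [absurd h hsqp, absurd h hsqq, absurd h hsqr]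
    · rcases comp_p sq ht.symm with h|h|h
      exacts [absurd h hsqv, absurd h hsqu, absurd h (fun e => h1 e.symm)]
    · exact absurd rfl htq
    · rcases comp_r sq ht.symm with h|h|h
      exacts [absurd h hsqv, absurd h hsqu, absurd h h3]
    · rcases complete_u sq ht.symm with h|h|h
      exacts [absurd h hsqp, absurd h hsqq, absurd h hsqr]
    · exact Or.inl rfl
    · exact absurd rfl ht.2.2.1
    · exact Or.inr rfl
  have hrel1 : Rel G isVar S sp sq ∧ Rel G isVar S sp sr := by
    rcases filt b hspb hbp with rfl | rfl <;> rcases filt c hspc hcp with rfl | rfl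
    · exact absurd rfl hbc
    · exact ⟨hspb, hspc⟩
    · exact ⟨hspc, hspb⟩
    · exact absurd rfl hbc
  have hrel2 : Rel G isVar S sq sr := by
    rcases filt' b' hsqb hbq with rfl | rfl <;> rcases filt' c' hsqc hcq with rfl | rfl
    · exact absurd rfl hbc'
    · exact hsqc
    · exact hsqb
    · exact absurd rfl hbc'
  exact no_tri hg hSvar helem hrel1.1 hrel2 hrel1.2
lemma FIN (hg : (8 : ℕ∞) ≤ G.girth)
    (hbip : ∀ x y, G.Adj x y → (isVar x ↔ ¬ isVar y))
    (hdegV : ∀ v, isVar v → G.degree v = 3) (hSvar : ∀ v ∈ S, isVar v)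
    (helem : ∀ c, ¬ isVar c → ∀ v ∈ S, G.Adj c v → (S.filter (fun u => G.Adj c u)).card = 2)
    (hchord : ∀ (v : V) (c : G.Walk v v), c.IsCycle → c.length ≤ 12 → ¬ HasChord G c)
    {v p q r u : V}
    (hvp : Rel G isVar S v p) (hvq : Rel G isVar S v q) (hvr : Rel G isVar S v r)
    (npq : p ≠ q) (npr : p ≠ r) (nqr : q ≠ r)
    (hnpq : ¬ Rel G isVar S p q) (hnpr : ¬ Rel G isVar S p r) (hnqr : ¬ Rel G isVar S q r)
    (huv : u ≠ v) (hup : Rel G isVar S u p) (huq : Rel G isVar S u q)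
    (hS8 : S.card ≤ 8) : False := by
  by_cases hur : Rel G isVar S u r
  · exact K3 hg hbip hdegV hSvar helem hchord hvp hvq hvr npq npr nqr hnpq hnpr hnqr
      huv hup huq hur hS8
  have hvS := hvp.1
  have hpS := hvp.2.1
  have hqS := hvq.2.1
  have hrS := hvr.2.1
  have huS := hup.1
  have nvp := hvp.2.2.1
  have nvq := hvq.2.2.1
  have nvr := hvr.2.2.1
  have nup := hup.2.2.1
  have nuq := huq.2.2.1
  have nur : u ≠ r := fun e => hnpr ((e ▸ hup) : Rel G isVar S r p).symm
  have complete_v := comp3 hg hbip hdegV hSvar helem hvS npq npr nqr hvp hvq hvr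
  obtain ⟨pw, hppw, hpwv, hpwu, comp_p⟩ :=
    pext2 hg hbip hdegV hSvar helem hpS huv.symm hvp.symm hup.symm
  obtain ⟨qw, hqqw, hqwv, hqwu, comp_q⟩ :=
    pext2 hg hbip hdegV hSvar helem hqS huv.symm hvq.symm huq.symm
  obtain ⟨r1, r2, nr12, nr1v, nr2v, hrr1, hrr2, comp_r⟩ :=
    pext1 hg hbip hdegV hSvar helem hrS hvr.symm
  have hpwS := hppw.2.1
  have hqwS := hqqw.2.1
  have hr1S := hrr1.2.1
  have hr2S := hrr2.2.1
  have npwp : pw ≠ p := hppw.2.2.1.symm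
  have nqwq : qw ≠ q := hqqw.2.2.1.symm
  have npwq : pw ≠ q := fun e => hnpq (e ▸ hppw)
  have npwr : pw ≠ r := fun e => hnpr (e ▸ hppw)
  have nqwp : qw ≠ p := fun e => hnpq (e ▸ hqqw).symm
  have nqwr : qw ≠ r := fun e => hnqr (e ▸ hqqw)
  have nr1r : r1 ≠ r := hrr1.2.2.1.symm
  have nr2r : r2 ≠ r := hrr2.2.2.1.symm
  have nr1p : r1 ≠ p := fun e => hnpr (e ▸ hrr1).symm
  have nr2p : r2 ≠ p := fun e => hnpr (e ▸ hrr2).symm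
  have nr1q : r1 ≠ q := fun e => hnqr (e ▸ hrr1).symm
  have nr2q : r2 ≠ q := fun e => hnqr (e ▸ hrr2).symm
  have nr1u : r1 ≠ u := fun e => hur (e ▸ hrr1).symm
  have nr2u : r2 ≠ u := fun e => hur (e ▸ hrr2).symm
  by_cases hw : pw = qw
  · -- p and q share both u and w := pw
    subst hw
    have hwp : Rel G isVar S pw p := hppw.symm
    have hwq : Rel G isVar S pw q := hqqw.symm
    by_cases hwr : Rel G isVar S pw r
    · exact K3 hg hbip hdegV hSvar helem hchord hvp hvq hvr npq npr nqr hnpq hnpr hnqr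
        hpwv hwp hwq hwr hS8
    have nr1w : r1 ≠ pw := fun e => hwr (e ▸ hrr1).symm
    have nr2w : r2 ≠ pw := fun e => hwr (e ▸ hrr2).symm
    have hnodup : ([v, p, q, r, u, pw, r1, r2] : List V).Nodup := by
      simp only [List.nodup_cons, List.mem_cons, List.not_mem_nil, or_false, List.nodup_nil,
        and_true]
      push_neg
      exact ⟨⟨nvp, nvq, nvr, huv.symm, hpwv.symm, nr1v.symm, nr2v.symm⟩,
        ⟨npq, npr, nup.symm, npwp.symm, nr1p.symm, nr2p.symm⟩,
        ⟨nqr, nuq.symm, npwq.symm, nr1q.symm, nr2q.symm⟩,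
        ⟨nur.symm, npwr.symm, nr1r.symm, nr2r.symm⟩,
        ⟨hpwu.symm, nr1u.symm, nr2u.symm⟩, ⟨nr1w.symm, nr2w.symm⟩, ⟨nr12, trivial⟩⟩
    have hmeml : ∀ x ∈ ([v, p, q, r, u, pw, r1, r2] : List V), x ∈ S := by
      intro x hx
      simp only [List.mem_cons, List.not_mem_nil, or_false] at hx
      rcases hx with rfl|rfl|rfl|rfl|rfl|rfl|rfl|rfl
      exacts [hvS, hpS, hqS, hrS, huS, hpwS, hr1S, hr2S]
    have mem8 := S_sub hnodup hmeml (by simpa using hS8)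
    have mem8' : ∀ z ∈ S, z = v ∨ z = p ∨ z = q ∨ z = r ∨ z = u ∨ z = pw ∨ z = r1 ∨ z = r2 := by
      intro z hz
      have := mem8 z hz
      simpa using this
    -- third partner of u
    obtain ⟨t, hut, htp, htq, comp_u⟩ :=
      pext2 hg hbip hdegV hSvar helem huS npq hup huq
    have ht12 : t = r1 ∨ t = r2 := by
      rcases mem8' t hut.2.1 with rfl|rfl|rfl|rfl|rfl|rfl|rfl|rfl
      · rcases complete_v u hut.symm with h|h|h
        exacts [absurd h nup, absurd h nuq, absurd h nur]
      · exact absurd rfl htp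
      · exact absurd rfl htq
      · exact absurd hut hur
      · exact absurd rfl hut.2.2.1
      · exact (no_tri hg hSvar helem hup.symm hut hwp.symm).elim
      · exact Or.inl rfl
      · exact Or.inr rfl
    -- third partner of w = pw
    obtain ⟨t', hwt', ht'p, ht'q, comp_w⟩ :=
      pext2 hg hbip hdegV hSvar helem hpwS npq hwp hwq
    have ht'12 : t' = r1 ∨ t' = r2 := by
      rcases mem8' t' hwt'.2.1 with rfl|rfl|rfl|rfl|rfl|rfl|rfl|rfl
      · rcases complete_v pw hwt'.symm with h|h|h
        exacts [absurd h npwp, absurd h npwq, absurd h npwr]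
      · exact absurd rfl ht'p
      · exact absurd rfl ht'q
      · exact absurd hwt' hwr
      · exact no_tri hg hSvar helem hwp.symm hwt' hup.symm |>.elim
      · exact absurd rfl hwt'.2.2.1
      · exact Or.inl rfl
      · exact Or.inr rfl
    -- symmetric core
    have core : ∀ z1 z2 : V, z1 ≠ z2 → z1 ≠ v → z2 ≠ v → z1 ≠ u → z2 ≠ u →
        z1 ≠ pw → z2 ≠ pw → z1 ≠ p → z2 ≠ p → z1 ≠ q → z2 ≠ q → z1 ≠ r → z2 ≠ r →
        Rel G isVar S r z1 → Rel G isVar S r z2 →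
        (∀ z ∈ S, z = v ∨ z = p ∨ z = q ∨ z = r ∨ z = u ∨ z = pw ∨ z = z1 ∨ z = z2) →
        Rel G isVar S u z1 → (∀ s, Rel G isVar S u s → s = p ∨ s = q ∨ s = z1) →
        (t' = z1 ∨ t' = z2) → False := by
      intro z1 z2 nz12 nz1v nz2v nz1u nz2u nz1w nz2w nz1p nz2p nz1q nz2q nz1r nz2r
        hrz1 hrz2 memS huz1 compu ht'c
      rcases ht'c with h | h
      · -- w adjacent to z1 as well: z2 gets stuck
        have hwz1 : Rel G isVar S pw z1 := h ▸ hwt'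
        have compw' : ∀ s, Rel G isVar S pw s → s = p ∨ s = q ∨ s = z1 := by
          intro s hs
          rcases comp_w s hs with h1|h1|h1
          exacts [Or.inl h1, Or.inr (Or.inl h1), Or.inr (Or.inr (h1.trans h))]
        have hz2S := hrz2.2.1
        obtain ⟨d, e, hde, hdr, her, hz2d, hz2e, -⟩ :=
          pext1 hg hbip hdegV hSvar helem hz2S hrz2.symm
        have compz1 : ∀ s, Rel G isVar S z1 s → s = r ∨ s = u ∨ s = pw :=
          comp3 hg hbip hdegV hSvar helem hrz1.2.1 nur.symm npwr.symm hpwu.symm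
            hrz1.symm huz1.symm hwz1.symm
        rcases memS d hz2d.2.1 with rfl|rfl|rfl|rfl|rfl|rfl|rfl|rfl
        · rcases complete_v z2 hz2d.symm with h1|h1|h1
          exacts [absurd h1 nz2p, absurd h1 nz2q, absurd h1 nz2r]
        · rcases comp_p z2 hz2d.symm with h1|h1|h1
          exacts [absurd h1 nz2v, absurd h1 nz2u, absurd h1 nz2w]
        · rcases comp_q z2 hz2d.symm with h1|h1|h1
          exacts [absurd h1 nz2v, absurd h1 nz2u, absurd h1 nz2w]
        · exact absurd rfl hdr
        · rcases compu z2 hz2d.symm with h1|h1|h1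
          exacts [absurd h1 nz2p, absurd h1 nz2q, absurd h1 nz12.symm]
        · rcases compw' z2 hz2d.symm with h1|h1|h1
          exacts [absurd h1 nz2p, absurd h1 nz2q, absurd h1 nz12.symm]
        · rcases compz1 z2 hz2d.symm with h1|h1|h1
          exacts [absurd h1 nz2r, absurd h1 nz2u, absurd h1 nz2w]
        · exact absurd rfl hz2d.2.2.1
      · -- w adjacent to z2: get the chorded hexagon
        have hwz2 : Rel G isVar S pw z2 := h ▸ hwt'
        have compw' : ∀ s, Rel G isVar S pw s → s = p ∨ s = q ∨ s = z2 := by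
          intro s hs
          rcases comp_w s hs with h1|h1|h1
          exacts [Or.inl h1, Or.inr (Or.inl h1), Or.inr (Or.inr (h1.trans h))]
        obtain ⟨g, hz1g, hgr, hgu, -⟩ :=
          pext2 hg hbip hdegV hSvar helem hrz1.2.1 nur.symm hrz1.symm huz1.symm
        have hgz2 : g = z2 := by
          rcases memS g hz1g.2.1 with rfl|rfl|rfl|rfl|rfl|rfl|rfl|rfl
          · rcases complete_v z1 hz1g.symm with h1|h1|h1
            exacts [absurd h1 nz1p, absurd h1 nz1q, absurd h1 nz1r]
          · rcases comp_p z1 hz1g.symm with h1|h1|h1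
            exacts [absurd h1 nz1v, absurd h1 nz1u, absurd h1 nz1w]
          · rcases comp_q z1 hz1g.symm with h1|h1|h1
            exacts [absurd h1 nz1v, absurd h1 nz1u, absurd h1 nz1w]
          · exact absurd rfl hgr
          · exact absurd rfl hgu
          · rcases compw' z1 hz1g.symm with h1|h1|h1
            exacts [absurd h1 nz1p, absurd h1 nz1q, absurd h1 nz12]
          · exact absurd rfl hz1g.2.2.1
          · rfl
        have hz1z2 : Rel G isVar S z1 z2 := hgz2 ▸ hz1g
        exact hex hchord hSvar helem nz1r nz12 nz1w nz1p nz1u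
          nz2r.symm npwr.symm npr.symm nur.symm nz2w nz2p nz2u npwp hpwu nup.symm
          hrz1.symm hrz2 hwz2.symm hwp hup.symm huz1
          (Or.inl rfl) hz1z2
    rcases ht12 with h | h
    · exact core r1 r2 nr12 nr1v nr2v nr1u nr2u nr1w nr2w nr1p nr2p nr1q nr2q nr1r nr2r
        hrr1 hrr2 mem8' (h ▸ hut)
        (fun s hs => by rcases comp_u s hs with h1|h1|h1
                        exacts [Or.inl h1, Or.inr (Or.inl h1), Or.inr (Or.inr (h1.trans h))])
        ht'12
    · exact core r2 r1 nr12.symm nr2v nr1v nr2u nr1u nr2w nr1w nr2p nr1p nr2q nr1q nr2r nr1r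
        hrr2 hrr1 (fun z hz => by rcases mem8' z hz with h1|h1|h1|h1|h1|h1|h1|h1 <;> tauto)
        (h ▸ hut)
        (fun s hs => by rcases comp_u s hs with h1|h1|h1
                        exacts [Or.inl h1, Or.inr (Or.inl h1), Or.inr (Or.inr (h1.trans h))])
        (by rcases ht'12 with h1|h1 <;> tauto)
  · -- pw ≠ qw
    by_cases hc1 : pw = r1 ∨ pw = r2
    · have hpwr : Rel G isVar S pw r := by
        rcases hc1 with h | h
        · exact (h ▸ hrr1.symm :)
        · exact (h ▸ hrr2.symm :)
      exact hex hchord hSvar helem nvq huv.symm nvp hpwv.symm nvr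
        nuq.symm npq.symm npwq.symm nqr nup hpwu.symm nur npwp.symm npr npwr
        hvq huq.symm hup hppw hpwr hvr.symm (Or.inr (Or.inl rfl)) hvp
    by_cases hc2 : qw = r1 ∨ qw = r2
    · have hqwr : Rel G isVar S qw r := by
        rcases hc2 with h | h
        · exact (h ▸ hrr1.symm :)
        · exact (h ▸ hrr2.symm :)
      exact hex hchord hSvar helem nvp huv.symm nvq hqwv.symm nvr
        nup.symm npq nqwp.symm npr nuq hqwu.symm nur nqwq.symm nqr nqwr
        hvp hup.symm huq hqqw hqwr hvr.symm (Or.inr (Or.inl rfl)) hvq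
    push_neg at hc1 hc2
    have hnodup : ([v, p, q, r, u, pw, qw, r1, r2] : List V).Nodup := by
      simp only [List.nodup_cons, List.mem_cons, List.not_mem_nil, or_false, List.nodup_nil,
        and_true]
      push_neg
      exact ⟨⟨nvp, nvq, nvr, huv.symm, hpwv.symm, hqwv.symm, nr1v.symm, nr2v.symm⟩,
        ⟨npq, npr, nup.symm, npwp.symm, nqwp.symm, nr1p.symm, nr2p.symm⟩,
        ⟨nqr, nuq.symm, npwq.symm, nqwq.symm, nr1q.symm, nr2q.symm⟩,
        ⟨nur.symm, npwr.symm, nqwr.symm, nr1r.symm, nr2r.symm⟩,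
        ⟨hpwu.symm, hqwu.symm, nr1u.symm, nr2u.symm⟩,
        ⟨hw, hc1.1, hc1.2⟩, ⟨hc2.1, hc2.2⟩, ⟨nr12, trivial⟩⟩
    have hmeml : ∀ x ∈ ([v, p, q, r, u, pw, qw, r1, r2] : List V), x ∈ S := by
      intro x hx
      simp only [List.mem_cons, List.not_mem_nil, or_false] at hx
      rcases hx with rfl|rfl|rfl|rfl|rfl|rfl|rfl|rfl|rfl
      exacts [hvS, hpS, hqS, hrS, huS, hpwS, hqwS, hr1S, hr2S]
    have h9 := list_card hnodup hmeml
    simp only [List.length_cons, List.length_nil] at h9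
    omega
lemma S_even
    (hbip : ∀ x y, G.Adj x y → (isVar x ↔ ¬ isVar y))
    (hdegV : ∀ v, isVar v → G.degree v = 3) (hSvar : ∀ v ∈ S, isVar v)
    (heven : ∀ w, ¬ isVar w → Even ((S.filter (fun v => G.Adj w v)).card)) :
    Even S.card := by
  classical
  set C := Finset.univ.filter (fun w => ¬ isVar w) with hC
  have key : ∑ c ∈ C, (S.filter (fun v => G.Adj c v)).card = 3 * S.card := by
    have h1 : ∀ c, (S.filter (fun v => G.Adj c v)).card
        = ∑ v ∈ S, if G.Adj c v then 1 else 0 := by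
      intro c; rw [Finset.card_filter]
    calc ∑ c ∈ C, (S.filter (fun v => G.Adj c v)).card
        = ∑ c ∈ C, ∑ v ∈ S, if G.Adj c v then 1 else 0 := by
          exact Finset.sum_congr rfl fun c _ => h1 c
      _ = ∑ v ∈ S, ∑ c ∈ C, if G.Adj c v then 1 else 0 := Finset.sum_comm
      _ = ∑ v ∈ S, (C.filter (fun c => G.Adj c v)).card := by
          exact Finset.sum_congr rfl fun v _ => (Finset.card_filter _ _).symm
      _ = ∑ v ∈ S, 3 := by
          refine Finset.sum_congr rfl fun v hv => ?_
          have hvv := hSvar v hv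
          have : C.filter (fun c => G.Adj c v) = G.neighborFinset v := by
            ext c
            simp only [hC, Finset.mem_filter, Finset.mem_univ, true_and,
              SimpleGraph.mem_neighborFinset]
            constructor
            · rintro ⟨-, h⟩; exact h.symm
            · intro h
              exact ⟨(hbip v c h).mp hvv, h.symm⟩
          rw [this]
          exact hdegV v hvv
      _ = 3 * S.card := by rw [Finset.sum_const, smul_eq_mul, mul_comm]
  have hdvd : 2 ∣ ∑ c ∈ C, (S.filter (fun v => G.Adj c v)).card := by
    refine Finset.dvd_sum fun c hc => ?_
    have := heven c (Finset.mem_filter.mp hc).2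
    exact this.two_dvd
  rw [key] at hdvd
  rw [Nat.even_iff]
  omega

lemma four_elems {s : Finset V} (h : 4 ≤ s.card) :
    ∃ a b c d, a ∈ s ∧ b ∈ s ∧ c ∈ s ∧ d ∈ s ∧ a ≠ b ∧ a ≠ c ∧ a ≠ d ∧ b ≠ c ∧ b ≠ d ∧
      c ≠ d := by
  obtain ⟨a, ha⟩ := Finset.card_pos.mp (show 0 < s.card by omega)
  have h1 : 3 ≤ (s.erase a).card := by
    rw [Finset.card_erase_of_mem ha]; omega
  obtain ⟨b, hb⟩ := Finset.card_pos.mp (by omega : 0 < (s.erase a).card)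
  have h2 : 2 ≤ ((s.erase a).erase b).card := by
    rw [Finset.card_erase_of_mem hb]; omega
  obtain ⟨c, hc⟩ := Finset.card_pos.mp (by omega : 0 < ((s.erase a).erase b).card)
  have h3 : 1 ≤ (((s.erase a).erase b).erase c).card := by
    rw [Finset.card_erase_of_mem hc]; omega
  obtain ⟨d, hd⟩ := Finset.card_pos.mp (by omega : 0 < (((s.erase a).erase b).erase c).card)
  have hbm := Finset.mem_erase.mp hb
  have hcm := Finset.mem_erase.mp hc
  have hcm' := Finset.mem_erase.mp hcm.2
  have hdm := Finset.mem_erase.mp hd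
  have hdm' := Finset.mem_erase.mp hdm.2
  have hdm'' := Finset.mem_erase.mp hdm'.2
  exact ⟨a, b, c, d, ha, hbm.2, hcm'.2, hdm''.2, (hbm.1).symm, (hcm'.1).symm,
    (hdm''.1).symm, (hcm.1).symm, (hdm'.1).symm, (hdm.1).symm⟩

lemma other2
    (heven : ∀ w, ¬ isVar w → Even ((S.filter (fun v => G.Adj w v)).card))
    {f z : V} (hf : ¬ isVar f) (hz : z ∈ S) (ha : G.Adj f z) :
    ∃ u, u ∈ S ∧ u ≠ z ∧ G.Adj f u := by
  have he := heven f hf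
  have h1 : z ∈ S.filter (fun v => G.Adj f v) := Finset.mem_filter.mpr ⟨hz, ha⟩
  have h2 : 1 ≤ (S.filter (fun v => G.Adj f v)).card := Finset.card_pos.mpr ⟨z, h1⟩
  have h3 : 2 ≤ (S.filter (fun v => G.Adj f v)).card := by
    rcases he with ⟨k, hk⟩; omega
  have h4 : 0 < ((S.filter (fun v => G.Adj f v)).erase z).card := by
    rw [Finset.card_erase_of_mem h1]; omega
  obtain ⟨u, hu⟩ := Finset.card_pos.mp h4
  have hum := Finset.mem_erase.mp hu
  have huf := Finset.mem_filter.mp hum.2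
  exact ⟨u, huf.1, hum.1, huf.2⟩

lemma caseA (hg : (8 : ℕ∞) ≤ G.girth)
    (hbip : ∀ x y, G.Adj x y → (isVar x ↔ ¬ isVar y))
    (hdegV : ∀ v, isVar v → G.degree v = 3) (hSvar : ∀ v ∈ S, isVar v)
    (heven : ∀ w, ¬ isVar w → Even ((S.filter (fun v => G.Adj w v)).card))
    {c0 : V} (hc0 : ¬ isVar c0) (h4 : 4 ≤ (S.filter (fun v => G.Adj c0 v)).card) :
    10 ≤ S.card := by
  obtain ⟨v1, v2, v3, v4, m1, m2, m3, m4, n12, n13, n14, n23, n24, n34⟩ := four_elems h4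
  rw [Finset.mem_filter] at m1 m2 m3 m4
  obtain ⟨hv1S, hav1⟩ := m1
  obtain ⟨hv2S, hav2⟩ := m2
  obtain ⟨hv3S, hav3⟩ := m3
  obtain ⟨hv4S, hav4⟩ := m4
  have getchecks : ∀ x, x ∈ S → G.Adj c0 x → ∃ f g, ¬ isVar f ∧ ¬ isVar g ∧ f ≠ g ∧
      f ≠ c0 ∧ g ≠ c0 ∧ G.Adj f x ∧ G.Adj g x := by
    intro x hx hax
    have hvx := hSvar x hx
    have hdeg : (G.neighborFinset x).card = 3 := hdegV x hvx
    have hc0m : c0 ∈ G.neighborFinset x := SimpleGraph.mem_neighborFinset .. |>.mpr hax.symm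
    have h2 : ((G.neighborFinset x).erase c0).card = 2 := by
      rw [Finset.card_erase_of_mem hc0m, hdeg]
    obtain ⟨f, g, hfg, hset⟩ := Finset.card_eq_two.mp h2
    have hfm : f ∈ (G.neighborFinset x).erase c0 := by rw [hset]; simp
    have hgm : g ∈ (G.neighborFinset x).erase c0 := by rw [hset]; simp
    have hf1 := Finset.mem_erase.mp hfm
    have hg1 := Finset.mem_erase.mp hgm
    have haf : G.Adj x f := SimpleGraph.mem_neighborFinset .. |>.mp hf1.2
    have hag : G.Adj x g := SimpleGraph.mem_neighborFinset .. |>.mp hg1.2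
    exact ⟨f, g, (hbip x f haf).mp hvx, (hbip x g hag).mp hvx, hfg, hf1.1, hg1.1,
      haf.symm, hag.symm⟩
  obtain ⟨f1, g1, cf1, cg1, nfg1, nf1c0, ng1c0, af1, ag1⟩ := getchecks v1 hv1S hav1
  obtain ⟨f2, g2, cf2, cg2, nfg2, nf2c0, ng2c0, af2, ag2⟩ := getchecks v2 hv2S hav2
  obtain ⟨f3, g3, cf3, cg3, nfg3, nf3c0, ng3c0, af3, ag3⟩ := getchecks v3 hv3S hav3
  obtain ⟨a1, ha1S, ha1v1, ha1f⟩ := other2 heven cf1 hv1S af1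
  obtain ⟨a2, ha2S, ha2v1, ha2g⟩ := other2 heven cg1 hv1S ag1
  obtain ⟨b1, hb1S, hb1v2, hb1f⟩ := other2 heven cf2 hv2S af2
  obtain ⟨b2, hb2S, hb2v2, hb2g⟩ := other2 heven cg2 hv2S ag2
  obtain ⟨c1, hc1S, hc1v3, hc1f⟩ := other2 heven cf3 hv3S af3
  obtain ⟨c2, hc2S, hc2v3, hc2g⟩ := other2 heven cg3 hv3S ag3
  -- u ≠ other v's
  have hne1 : ∀ f x u y, ¬ isVar f → f ≠ c0 → G.Adj f x → G.Adj f u → u ≠ x →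
      G.Adj c0 x → G.Adj c0 y → y ≠ x → u ≠ y := by
    intro f x u y hf hfc0 hfx hfu hux hax hay hyx e
    have hcu : G.Adj c0 u := by rw [e]; exact hay
    exact no_share hg hfc0 hux.symm hfx hfu hax hcu
  have hne2 : ∀ f g x y u w, ¬ isVar f → ¬ isVar g → f ≠ c0 → g ≠ c0 →
      G.Adj f x → G.Adj f u → G.Adj g y → G.Adj g w → x ≠ y →
      G.Adj c0 x → G.Adj c0 y → u ≠ x → u ≠ y → w ≠ x → w ≠ y →
      u ∈ S → x ∈ S → y ∈ S → u ≠ w := by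
    intro f g x y u w hf hhg hfc0 hgc0 hfx hfu hgy hgw hxy hax hay hux huy hwx hwy huSS hxSS hySS e
    have hfg : f ≠ g := by
      intro e2
      subst e2
      exact no_share hg hfc0 hxy hfx hgy hax hay
    have hgu : G.Adj g u := by rw [e]; exact hgw
    have sep : ∀ a b : V, isVar a → ¬ isVar b → a ≠ b := fun a b ha hb h => hb (h ▸ ha)
    exact no6 hg hfu.symm hfx hax.symm hay hgy.symm hgu
      hux (sep u c0 (hSvar u huSS) hc0) huy hfc0 (sep y f (hSvar y hySS) hf).symm hfg
      hxy (sep x g (hSvar x hxSS) hhg) (fun h => hgc0 h.symm)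
  have qa1v2 : a1 ≠ v2 := hne1 f1 v1 a1 v2 cf1 nf1c0 af1 ha1f ha1v1 hav1 hav2 n12.symm
  have qa1v3 : a1 ≠ v3 := hne1 f1 v1 a1 v3 cf1 nf1c0 af1 ha1f ha1v1 hav1 hav3 n13.symm
  have qa1v4 : a1 ≠ v4 := hne1 f1 v1 a1 v4 cf1 nf1c0 af1 ha1f ha1v1 hav1 hav4 n14.symm
  have qa2v2 : a2 ≠ v2 := hne1 g1 v1 a2 v2 cg1 ng1c0 ag1 ha2g ha2v1 hav1 hav2 n12.symm
  have qa2v3 : a2 ≠ v3 := hne1 g1 v1 a2 v3 cg1 ng1c0 ag1 ha2g ha2v1 hav1 hav3 n13.symm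
  have qa2v4 : a2 ≠ v4 := hne1 g1 v1 a2 v4 cg1 ng1c0 ag1 ha2g ha2v1 hav1 hav4 n14.symm
  have qb1v1 : b1 ≠ v1 := hne1 f2 v2 b1 v1 cf2 nf2c0 af2 hb1f hb1v2 hav2 hav1 n12
  have qb1v3 : b1 ≠ v3 := hne1 f2 v2 b1 v3 cf2 nf2c0 af2 hb1f hb1v2 hav2 hav3 n23.symm
  have qb1v4 : b1 ≠ v4 := hne1 f2 v2 b1 v4 cf2 nf2c0 af2 hb1f hb1v2 hav2 hav4 n24.symm
  have qb2v1 : b2 ≠ v1 := hne1 g2 v2 b2 v1 cg2 ng2c0 ag2 hb2g hb2v2 hav2 hav1 n12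
  have qb2v3 : b2 ≠ v3 := hne1 g2 v2 b2 v3 cg2 ng2c0 ag2 hb2g hb2v2 hav2 hav3 n23.symm
  have qb2v4 : b2 ≠ v4 := hne1 g2 v2 b2 v4 cg2 ng2c0 ag2 hb2g hb2v2 hav2 hav4 n24.symm
  have qc1v1 : c1 ≠ v1 := hne1 f3 v3 c1 v1 cf3 nf3c0 af3 hc1f hc1v3 hav3 hav1 n13
  have qc1v2 : c1 ≠ v2 := hne1 f3 v3 c1 v2 cf3 nf3c0 af3 hc1f hc1v3 hav3 hav2 n23
  have qc1v4 : c1 ≠ v4 := hne1 f3 v3 c1 v4 cf3 nf3c0 af3 hc1f hc1v3 hav3 hav4 n34.symm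
  have qc2v1 : c2 ≠ v1 := hne1 g3 v3 c2 v1 cg3 ng3c0 ag3 hc2g hc2v3 hav3 hav1 n13
  have qc2v2 : c2 ≠ v2 := hne1 g3 v3 c2 v2 cg3 ng3c0 ag3 hc2g hc2v3 hav3 hav2 n23
  have qc2v4 : c2 ≠ v4 := hne1 g3 v3 c2 v4 cg3 ng3c0 ag3 hc2g hc2v3 hav3 hav4 n34.symm
  have qa12 : a1 ≠ a2 := by
    intro e
    have : G.Adj g1 a1 := by rw [e]; exact ha2g
    exact no_share hg nfg1 ha1v1.symm af1 ha1f ag1 this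
  have qb12 : b1 ≠ b2 := by
    intro e
    have : G.Adj g2 b1 := by rw [e]; exact hb2g
    exact no_share hg nfg2 hb1v2.symm af2 hb1f ag2 this
  have qc12 : c1 ≠ c2 := by
    intro e
    have : G.Adj g3 c1 := by rw [e]; exact hc2g
    exact no_share hg nfg3 hc1v3.symm af3 hc1f ag3 this
  have qa1b1 : a1 ≠ b1 := hne2 f1 f2 v1 v2 a1 b1 cf1 cf2 nf1c0 nf2c0 af1 ha1f af2 hb1f n12
    hav1 hav2 ha1v1 qa1v2 qb1v1 hb1v2 ha1S hv1S hv2S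
  have qa1b2 : a1 ≠ b2 := hne2 f1 g2 v1 v2 a1 b2 cf1 cg2 nf1c0 ng2c0 af1 ha1f ag2 hb2g n12
    hav1 hav2 ha1v1 qa1v2 qb2v1 hb2v2 ha1S hv1S hv2S
  have qa2b1 : a2 ≠ b1 := hne2 g1 f2 v1 v2 a2 b1 cg1 cf2 ng1c0 nf2c0 ag1 ha2g af2 hb1f n12
    hav1 hav2 ha2v1 qa2v2 qb1v1 hb1v2 ha2S hv1S hv2S
  have qa2b2 : a2 ≠ b2 := hne2 g1 g2 v1 v2 a2 b2 cg1 cg2 ng1c0 ng2c0 ag1 ha2g ag2 hb2g n12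
    hav1 hav2 ha2v1 qa2v2 qb2v1 hb2v2 ha2S hv1S hv2S
  have qa1c1 : a1 ≠ c1 := hne2 f1 f3 v1 v3 a1 c1 cf1 cf3 nf1c0 nf3c0 af1 ha1f af3 hc1f n13
    hav1 hav3 ha1v1 qa1v3 qc1v1 hc1v3 ha1S hv1S hv3S
  have qa1c2 : a1 ≠ c2 := hne2 f1 g3 v1 v3 a1 c2 cf1 cg3 nf1c0 ng3c0 af1 ha1f ag3 hc2g n13
    hav1 hav3 ha1v1 qa1v3 qc2v1 hc2v3 ha1S hv1S hv3S
  have qa2c1 : a2 ≠ c1 := hne2 g1 f3 v1 v3 a2 c1 cg1 cf3 ng1c0 nf3c0 ag1 ha2g af3 hc1f n13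
    hav1 hav3 ha2v1 qa2v3 qc1v1 hc1v3 ha2S hv1S hv3S
  have qa2c2 : a2 ≠ c2 := hne2 g1 g3 v1 v3 a2 c2 cg1 cg3 ng1c0 ng3c0 ag1 ha2g ag3 hc2g n13
    hav1 hav3 ha2v1 qa2v3 qc2v1 hc2v3 ha2S hv1S hv3S
  have qb1c1 : b1 ≠ c1 := hne2 f2 f3 v2 v3 b1 c1 cf2 cf3 nf2c0 nf3c0 af2 hb1f af3 hc1f n23
    hav2 hav3 hb1v2 qb1v3 qc1v2 hc1v3 hb1S hv2S hv3S
  have qb1c2 : b1 ≠ c2 := hne2 f2 g3 v2 v3 b1 c2 cf2 cg3 nf2c0 ng3c0 af2 hb1f ag3 hc2g n23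
    hav2 hav3 hb1v2 qb1v3 qc2v2 hc2v3 hb1S hv2S hv3S
  have qb2c1 : b2 ≠ c1 := hne2 g2 f3 v2 v3 b2 c1 cg2 cf3 ng2c0 nf3c0 ag2 hb2g af3 hc1f n23
    hav2 hav3 hb2v2 qb2v3 qc1v2 hc1v3 hb2S hv2S hv3S
  have qb2c2 : b2 ≠ c2 := hne2 g2 g3 v2 v3 b2 c2 cg2 cg3 ng2c0 ng3c0 ag2 hb2g ag3 hc2g n23
    hav2 hav3 hb2v2 qb2v3 qc2v2 hc2v3 hb2S hv2S hv3S
  have hnodup : ([v1, v2, v3, v4, a1, a2, b1, b2, c1, c2] : List V).Nodup := by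
    simp only [List.nodup_cons, List.mem_cons, List.not_mem_nil, or_false, List.nodup_nil,
      and_true]
    push_neg
    exact ⟨⟨n12, n13, n14, ha1v1.symm, ha2v1.symm, qb1v1.symm, qb2v1.symm, qc1v1.symm,
        qc2v1.symm⟩,
      ⟨n23, n24, qa1v2.symm, qa2v2.symm, hb1v2.symm, hb2v2.symm, qc1v2.symm, qc2v2.symm⟩,
      ⟨n34, qa1v3.symm, qa2v3.symm, qb1v3.symm, qb2v3.symm, hc1v3.symm, hc2v3.symm⟩,
      ⟨qa1v4.symm, qa2v4.symm, qb1v4.symm, qb2v4.symm, qc1v4.symm, qc2v4.symm⟩,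
      ⟨qa12, qa1b1, qa1b2, qa1c1, qa1c2⟩, ⟨qa2b1, qa2b2, qa2c1, qa2c2⟩,
      ⟨qb12, qb1c1, qb1c2⟩, ⟨qb2c1, qb2c2⟩, ⟨qc12, trivial⟩⟩
  have hmeml : ∀ x ∈ ([v1, v2, v3, v4, a1, a2, b1, b2, c1, c2] : List V), x ∈ S := by
    intro x hx
    simp only [List.mem_cons, List.not_mem_nil, or_false] at hx
    rcases hx with rfl|rfl|rfl|rfl|rfl|rfl|rfl|rfl|rfl|rfl
    exacts [hv1S, hv2S, hv3S, hv4S, ha1S, ha2S, hb1S, hb2S, hc1S, hc2S]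
  have h10 := list_card hnodup hmeml
  simpa using h10

end RelLemmas
end Stmt15Proof

open Stmt15Proof in
/-- A variable-regular Tanner graph with column weight 3, girth (at least) 8, in
which all cycles of length up to 12 are chordless, has minimum distance at least 10:
every nonempty `(a,0)` trapping set (set of variable nodes all of whose adjacent
check nodes have even degree into it, i.e. the support of a codeword) has `a ≥ 10`. -/
theorem stmt_15 {V : Type*} [Fintype V] [DecidableEq V]
    (G : SimpleGraph V) [DecidableRel G.Adj]
    (isVar : V → Prop) [DecidablePred isVar]
    (hbip : ∀ x y, G.Adj x y → (isVar x ↔ ¬ isVar y))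
    (hdegV : ∀ v, isVar v → G.degree v = 3)
    (hg : (8 : ℕ∞) ≤ G.girth)
    (hchord : ∀ (v : V) (c : G.Walk v v), c.IsCycle → c.length ≤ 12 → ¬ HasChord G c)
    (S : Finset V) (hSvar : ∀ v ∈ S, isVar v) (hSne : S.Nonempty)
    (heven : ∀ w, ¬ isVar w → Even ((S.filter (fun v => G.Adj w v)).card)) :
    10 ≤ S.card := by
  classical
  by_cases hbig : ∃ c, ¬ isVar c ∧ 4 ≤ (S.filter (fun v => G.Adj c v)).card
  · obtain ⟨c0, hc0, h4⟩ := hbig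
    exact caseA hg hbip hdegV hSvar heven hc0 h4
  push_neg at hbig
  have helem : ∀ c, ¬ isVar c → ∀ v ∈ S, G.Adj c v →
      (S.filter (fun u => G.Adj c u)).card = 2 := by
    intro c hc v hv ha
    have h1 := heven c hc
    have h2 := hbig c hc
    have h3 : v ∈ S.filter (fun u => G.Adj c u) := Finset.mem_filter.mpr ⟨hv, ha⟩
    have h4 : 1 ≤ (S.filter (fun u => G.Adj c u)).card := Finset.card_pos.mpr ⟨v, h3⟩
    rcases h1 with ⟨k, hk⟩
    omega
  by_contra hlt
  push_neg at hlt
  have hev := S_even hbip hdegV hSvar heven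
  have hS8 : S.card ≤ 8 := by
    rcases hev with ⟨k, hk⟩; omega
  obtain ⟨v, hvS⟩ := hSne
  obtain ⟨p, q, r, npq, npr, nqr, hvp, hvq, hvr, -⟩ :=
    partners3 hg hbip hdegV hSvar helem hvS
  have hnpq : ¬ Rel G isVar S p q := fun h => no_tri hg hSvar helem hvp h hvq
  have hnpr : ¬ Rel G isVar S p r := fun h => no_tri hg hSvar helem hvp h hvr
  have hnqr : ¬ Rel G isVar S q r := fun h => no_tri hg hSvar helem hvq h hvr
  obtain ⟨p1, p2, np12, np1v, np2v, hpp1, hpp2, -⟩ :=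
    pext1 hg hbip hdegV hSvar helem hvp.2.1 hvp.symm
  obtain ⟨q1, q2, nq12, nq1v, nq2v, hqq1, hqq2, -⟩ :=
    pext1 hg hbip hdegV hSvar helem hvq.2.1 hvq.symm
  obtain ⟨r1, r2, nr12, nr1v, nr2v, hrr1, hrr2, -⟩ :=
    pext1 hg hbip hdegV hSvar helem hvr.2.1 hvr.symm
  by_cases h1 : p1 = q1 ∨ p1 = q2 ∨ p2 = q1 ∨ p2 = q2
  · rcases h1 with h | h | h | h
    · exact FIN hg hbip hdegV hSvar helem hchord hvp hvq hvr npq npr nqr hnpq hnpr hnqr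
        np1v hpp1.symm (by rw [h]; exact hqq1.symm) hS8
    · exact FIN hg hbip hdegV hSvar helem hchord hvp hvq hvr npq npr nqr hnpq hnpr hnqr
        np1v hpp1.symm (by rw [h]; exact hqq2.symm) hS8
    · exact FIN hg hbip hdegV hSvar helem hchord hvp hvq hvr npq npr nqr hnpq hnpr hnqr
        np2v hpp2.symm (by rw [h]; exact hqq1.symm) hS8
    · exact FIN hg hbip hdegV hSvar helem hchord hvp hvq hvr npq npr nqr hnpq hnpr hnqr
        np2v hpp2.symm (by rw [h]; exact hqq2.symm) hS8
  by_cases h2 : q1 = r1 ∨ q1 = r2 ∨ q2 = r1 ∨ q2 = r2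
  · have hnqp : ¬ Rel G isVar S q p := fun h => hnpq h.symm
    have hnrp : ¬ Rel G isVar S r p := fun h => hnpr h.symm
    rcases h2 with h | h | h | h
    · exact FIN hg hbip hdegV hSvar helem hchord hvq hvr hvp nqr npq.symm npr.symm
        hnqr hnqp hnrp nq1v hqq1.symm (by rw [h]; exact hrr1.symm) hS8
    · exact FIN hg hbip hdegV hSvar helem hchord hvq hvr hvp nqr npq.symm npr.symm
        hnqr hnqp hnrp nq1v hqq1.symm (by rw [h]; exact hrr2.symm) hS8
    · exact FIN hg hbip hdegV hSvar helem hchord hvq hvr hvp nqr npq.symm npr.symm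
        hnqr hnqp hnrp nq2v hqq2.symm (by rw [h]; exact hrr1.symm) hS8
    · exact FIN hg hbip hdegV hSvar helem hchord hvq hvr hvp nqr npq.symm npr.symm
        hnqr hnqp hnrp nq2v hqq2.symm (by rw [h]; exact hrr2.symm) hS8
  by_cases h3 : p1 = r1 ∨ p1 = r2 ∨ p2 = r1 ∨ p2 = r2
  · have hnrq : ¬ Rel G isVar S r q := fun h => hnqr h.symm
    rcases h3 with h | h | h | h
    · exact FIN hg hbip hdegV hSvar helem hchord hvp hvr hvq npr npq nqr.symm
        hnpr hnpq hnrq np1v hpp1.symm (by rw [h]; exact hrr1.symm) hS8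
    · exact FIN hg hbip hdegV hSvar helem hchord hvp hvr hvq npr npq nqr.symm
        hnpr hnpq hnrq np1v hpp1.symm (by rw [h]; exact hrr2.symm) hS8
    · exact FIN hg hbip hdegV hSvar helem hchord hvp hvr hvq npr npq nqr.symm
        hnpr hnpq hnrq np2v hpp2.symm (by rw [h]; exact hrr1.symm) hS8
    · exact FIN hg hbip hdegV hSvar helem hchord hvp hvr hvq npr npq nqr.symm
        hnpr hnpq hnrq np2v hpp2.symm (by rw [h]; exact hrr2.symm) hS8
  push_neg at h1 h2 h3
  have nvp := hvp.2.2.1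
  have nvq := hvq.2.2.1
  have nvr := hvr.2.2.1
  have np1p : p1 ≠ p := hpp1.2.2.1.symm
  have np2p : p2 ≠ p := hpp2.2.2.1.symm
  have nq1q : q1 ≠ q := hqq1.2.2.1.symm
  have nq2q : q2 ≠ q := hqq2.2.2.1.symm
  have nr1r : r1 ≠ r := hrr1.2.2.1.symm
  have nr2r : r2 ≠ r := hrr2.2.2.1.symm
  have np1q : p1 ≠ q := fun e => hnpq (e ▸ hpp1)
  have np2q : p2 ≠ q := fun e => hnpq (e ▸ hpp2)
  have np1r : p1 ≠ r := fun e => hnpr (e ▸ hpp1)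
  have np2r : p2 ≠ r := fun e => hnpr (e ▸ hpp2)
  have nq1p : q1 ≠ p := fun e => hnpq (e ▸ hqq1).symm
  have nq2p : q2 ≠ p := fun e => hnpq (e ▸ hqq2).symm
  have nq1r : q1 ≠ r := fun e => hnqr (e ▸ hqq1)
  have nq2r : q2 ≠ r := fun e => hnqr (e ▸ hqq2)
  have nr1p : r1 ≠ p := fun e => hnpr (e ▸ hrr1).symm
  have nr2p : r2 ≠ p := fun e => hnpr (e ▸ hrr2).symm
  have nr1q : r1 ≠ q := fun e => hnqr (e ▸ hrr1).symm
  have nr2q : r2 ≠ q := fun e => hnqr (e ▸ hrr2).symm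
  have hnodup : ([v, p, q, r, p1, p2, q1, q2, r1, r2] : List V).Nodup := by
    simp only [List.nodup_cons, List.mem_cons, List.not_mem_nil, or_false, List.nodup_nil,
      and_true]
    push_neg
    exact ⟨⟨nvp, nvq, nvr, np1v.symm, np2v.symm, nq1v.symm, nq2v.symm, nr1v.symm, nr2v.symm⟩,
      ⟨npq, npr, np1p.symm, np2p.symm, nq1p.symm, nq2p.symm, nr1p.symm, nr2p.symm⟩,
      ⟨nqr, np1q.symm, np2q.symm, nq1q.symm, nq2q.symm, nr1q.symm, nr2q.symm⟩,
      ⟨np1r.symm, np2r.symm, nq1r.symm, nq2r.symm, nr1r.symm, nr2r.symm⟩,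
      ⟨np12, h1.1, h1.2.1, h3.1, h3.2.1⟩, ⟨h1.2.2.1, h1.2.2.2, h3.2.2.1, h3.2.2.2⟩,
      ⟨nq12, h2.1, h2.2.1⟩, ⟨h2.2.2.1, h2.2.2.2⟩, ⟨nr12, trivial⟩⟩
  have hmeml : ∀ x ∈ ([v, p, q, r, p1, p2, q1, q2, r1, r2] : List V), x ∈ S := by
    intro x hx
    simp only [List.mem_cons, List.not_mem_nil, or_false] at hx
    rcases hx with rfl|rfl|rfl|rfl|rfl|rfl|rfl|rfl|rfl|rfl
    exacts [hvS, hvp.2.1, hvq.2.1, hvr.2.1, hpp1.2.1, hpp2.2.1, hqq1.2.1, hqq2.2.1,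
      hrr1.2.1, hrr2.2.1]
  have h10 := list_card hnodup hmeml
  simp only [List.length_cons, List.length_nil] at h10
  omega
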